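/- For every odd positive integer p = 2m+1, the double sum ∑_{m'=1}^{p} ∑_{k=0}^{p} (-1)^{m'+k} (1/m') · C(p,k)^2 · C(p, m'+k) equals (-1)^{(p+1)/2} (3p)!! / (3 · (p!!)^3), where n!! is the double factorial and C(p,j) = 0 for j > p. -/

import Mathlib

open Finset

lemma lemA (n k : ℕ) : ((n:ℚ)+1-k) * ((n+1).choose k : ℚ) = ((n:ℚ)+1) * (n.choose k : ℚ) := by
  rcases le_or_gt k (n+1) with h | h
  · have := Nat.choose_mul_succ_eq n k
    have hc : ((n.choose k * (n+1) : ℕ) : ℚ) = (((n+1).choose k * (n + 1 - k) : ℕ) : ℚ) := by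
      exact_mod_cast congrArg (Nat.cast (R := ℚ)) this
    push_cast [Nat.cast_sub h] at hc
    linarith [hc]
  · have h1 : (n+1).choose k = 0 := Nat.choose_eq_zero_of_lt h
    have h2 : n.choose k = 0 := Nat.choose_eq_zero_of_lt (by omega)
    simp [h1, h2]

lemma lemB (n k : ℕ) : (n.choose (k+1) : ℚ) * ((k:ℚ)+1) = (n.choose k : ℚ) * ((n:ℚ)-k) := by
  rcases le_or_gt k n with h | h
  · have := Nat.choose_succ_right_eq n k
    have hc : ((n.choose (k+1) * (k+1) : ℕ) : ℚ) = ((n.choose k * (n - k) : ℕ) : ℚ) := by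
      exact_mod_cast congrArg (Nat.cast (R := ℚ)) this
    push_cast [Nat.cast_sub h] at hc
    linarith [hc]
  · have h1 : n.choose (k+1) = 0 := Nat.choose_eq_zero_of_lt (by omega)
    have h2 : n.choose k = 0 := Nat.choose_eq_zero_of_lt h
    simp [h1, h2]

lemma altsum (n : ℕ) :
    ∑ m ∈ range (n+2), (-1:ℚ)^m * ((n+1).choose m : ℚ) = 0 := by
  have h := Int.alternating_sum_range_choose (n := n+1)
  rw [if_neg (Nat.succ_ne_zero n)] at h
  have h2 : ((∑ m ∈ range (n + 2), (-1) ^ m * ((n+1).choose m : ℤ) : ℤ) : ℚ) = ((0:ℤ):ℚ) :=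
    congrArg (Int.cast (R := ℚ)) h
  push_cast at h2
  exact h2

lemma lemH (n : ℕ) :
    ∑ m ∈ range (n+1), (-1:ℚ)^m * (n.choose m : ℚ) / m = - harmonic n := by
  induction n with
  | zero => simp [harmonic]
  | succ n ih =>
    set f : ℕ → ℚ := fun m => (-1:ℚ)^m * ((n+1).choose m : ℚ) / m with hf
    have hA : ∑ m ∈ range (n+2), f m = ∑ i ∈ range (n+1), f (i+1) + f 0 :=
      Finset.sum_range_succ' f (n+1)
    have hf0 : f 0 = 0 := by simp [hf]
    have hsplit : ∀ i ∈ range (n+1),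
        f (i+1) = (-1:ℚ)^(i+1) * (n.choose (i+1) : ℚ) / ((i:ℚ)+1)
          + (-1:ℚ)^(i+1) * (n.choose i : ℚ) / ((i:ℚ)+1) := by
      intro i _
      simp only [hf, Nat.choose_succ_succ]
      push_cast
      ring
    have e1 : ∑ i ∈ range (n+1), (-1:ℚ)^(i+1) * (n.choose (i+1) : ℚ) / ((i:ℚ)+1)
        = - harmonic n := by
      set g : ℕ → ℚ := fun m => (-1:ℚ)^m * (n.choose m : ℚ) / m with hg
      have hgA : ∑ m ∈ range (n+2), g m = ∑ i ∈ range (n+1), g (i+1) + g 0 :=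
        Finset.sum_range_succ' g (n+1)
      have hgB : ∑ m ∈ range (n+2), g m = ∑ m ∈ range (n+1), g m + g (n+1) :=
        Finset.sum_range_succ g (n+1)
      have hg0 : g 0 = 0 := by simp [hg]
      have hgn : g (n+1) = 0 := by
        simp [hg, Nat.choose_eq_zero_of_lt (Nat.lt_succ_self n)]
      have : ∑ i ∈ range (n+1), g (i+1) = - harmonic n := by
        rw [← add_zero (∑ i ∈ range (n+1), g (i+1)), ← hg0, ← hgA, hgB, hgn, add_zero, ih]
      rw [← this]
      apply Finset.sum_congr rfl
      intro i _
      simp only [hg]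
      push_cast
      ring
    have e2 : ∑ i ∈ range (n+1), (-1:ℚ)^(i+1) * (n.choose i : ℚ) / ((i:ℚ)+1)
        = - (1/((n:ℚ)+1)) := by
      have key : ∀ i ∈ range (n+1),
          (-1:ℚ)^(i+1) * (n.choose i : ℚ) / ((i:ℚ)+1)
          = (1/((n:ℚ)+1)) * ((-1:ℚ)^(i+1) * ((n+1).choose (i+1) : ℚ)) := by
        intro i _
        have h := Nat.add_one_mul_choose_eq n i
        have hc : (((n+1) * n.choose i : ℕ) : ℚ) = (((n+1).choose (i+1) * (i+1) : ℕ) : ℚ) :=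
          congrArg (Nat.cast (R := ℚ)) h
        push_cast at hc
        have hi : ((i:ℚ)+1) ≠ 0 := by positivity
        have hn1 : ((n:ℚ)+1) ≠ 0 := by positivity
        field_simp
        linear_combination hc
      rw [Finset.sum_congr rfl key, ← Finset.mul_sum]
      have : ∑ i ∈ range (n+1), (-1:ℚ)^(i+1) * ((n+1).choose (i+1) : ℚ)
          = ∑ m ∈ range (n+2), (-1:ℚ)^m * ((n+1).choose m : ℚ) - 1 := by
        rw [Finset.sum_range_succ' (fun m => (-1:ℚ)^m * ((n+1).choose m : ℚ)) (n+1)]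
        simp
      rw [this, altsum]
      field_simp
      norm_num
    calc ∑ m ∈ range (n+2), f m
        = ∑ i ∈ range (n+1), f (i+1) + f 0 := hA
      _ = ∑ i ∈ range (n+1), ((-1:ℚ)^(i+1) * (n.choose (i+1) : ℚ) / ((i:ℚ)+1)
          + (-1:ℚ)^(i+1) * (n.choose i : ℚ) / ((i:ℚ)+1)) := by
          rw [hf0, add_zero]; exact Finset.sum_congr rfl hsplit
      _ = - harmonic n + - (1/((n:ℚ)+1)) := by
          rw [Finset.sum_add_distrib, e1, e2]
      _ = - harmonic (n+1) := by
          rw [harmonic_succ]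
          push_cast
          ring

noncomputable def Dsum (p k : ℕ) : ℚ := ∑ m ∈ Icc 1 p, (-1:ℚ)^m * (p.choose (m+k) : ℚ) / m
noncomputable def Esum (p k : ℕ) : ℚ :=
  ∑ j ∈ range k, (-1:ℚ)^(k+j+1) * (p.choose j : ℚ) / ((k:ℚ) - j)

lemma Dsum_zero_eq (p : ℕ) :
    Dsum (p+1) 0 = ∑ m ∈ range (p+2), (-1:ℚ)^m * ((p+1).choose m : ℚ) / m := by
  rw [Dsum]
  rw [Finset.range_eq_Ico, show (0:ℕ) = 0 from rfl]
  rw [show Finset.Ico 0 (p+2) = insert 0 (Finset.Icc 1 (p+1)) by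
    ext x; simp [Finset.mem_Ico, Finset.mem_Icc]; omega]
  rw [Finset.sum_insert (by simp)]
  simp

lemma Drec (p k : ℕ) : Dsum (p+1) (k+1) = Dsum p (k+1) + Dsum p k := by
  rw [Dsum, Dsum, Dsum]
  have h1 : ∀ m ∈ Icc 1 (p+1),
      (-1:ℚ)^m * ((p+1).choose (m+(k+1)) : ℚ) / m
      = (-1:ℚ)^m * (p.choose (m+k) : ℚ) / m + (-1:ℚ)^m * (p.choose (m+k+1) : ℚ) / m := by
    intro m _
    have : m+(k+1) = (m+k)+1 := by ring
    rw [this, Nat.choose_succ_succ]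
    push_cast
    ring
  rw [Finset.sum_congr rfl h1, Finset.sum_add_distrib]
  have hIcc : Icc 1 (p+1) = insert (p+1) (Icc 1 p) := by
    ext x; simp [Finset.mem_Icc, Finset.mem_insert]; omega
  have hz1 : ((-1:ℚ)^(p+1) * (p.choose ((p+1)+k) : ℚ) / (p+1:ℕ)) = 0 := by
    rw [Nat.choose_eq_zero_of_lt (by omega)]; simp
  have hz2 : ((-1:ℚ)^(p+1) * (p.choose ((p+1)+k+1) : ℚ) / (p+1:ℕ)) = 0 := by
    rw [Nat.choose_eq_zero_of_lt (by omega)]; simp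
  rw [hIcc, Finset.sum_insert (by simp), Finset.sum_insert (by simp), hz1, hz2,
    zero_add, zero_add]
  rw [add_comm]
  rfl

lemma Erec (p k : ℕ) : Esum (p+1) (k+1) = Esum p (k+1) + Esum p k := by
  rw [Esum, Esum, Esum]
  push_cast
  rw [Finset.sum_range_succ' (fun j => (-1:ℚ)^(k+1+j+1) * ((p+1).choose j : ℚ) / ((k:ℚ)+1 - j)) k]
  rw [Finset.sum_range_succ' (fun j => (-1:ℚ)^(k+1+j+1) * (p.choose j : ℚ) / ((k:ℚ)+1 - j)) k]
  have hf0 : (-1:ℚ)^(k+1+0+1) * ((p+1).choose 0 : ℚ) / ((k:ℚ)+1 - ((0:ℕ):ℚ)) =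
      (-1:ℚ)^(k+1+0+1) * (p.choose 0 : ℚ) / ((k:ℚ)+1 - ((0:ℕ):ℚ)) := by
    simp
  push_cast at hf0 ⊢
  rw [hf0]
  have hsplit : ∀ j ∈ range k,
      (-1:ℚ)^(k+1+(j+1)+1) * ((p+1).choose (j+1) : ℚ) / ((k:ℚ)+1 - ((j:ℚ)+1))
      = (-1:ℚ)^(k+1+(j+1)+1) * (p.choose (j+1) : ℚ) / ((k:ℚ)+1 - ((j:ℚ)+1))
        + (-1:ℚ)^(k+j+1) * (p.choose j : ℚ) / ((k:ℚ) - j) := by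
    intro j _
    rw [Nat.choose_succ_succ]
    push_cast
    have hsgn : (-1:ℚ)^(k+1+(j+1)+1) = (-1:ℚ)^(k+j+1) := by
      have h2 : k+1+(j+1)+1 = (k+j+1) + 2 := by ring
      rw [h2, pow_add]
      norm_num
    rw [hsgn]
    ring
  rw [Finset.sum_congr rfl hsplit, Finset.sum_add_distrib]
  ring

lemma Esum_diag (p : ℕ) : Esum (p+1) (p+1) = harmonic (p+1) := by
  rw [Esum]
  have hrefl := Finset.sum_range_reflect
    (fun j => (-1:ℚ)^((p+1)+j+1) * ((p+1).choose j : ℚ) / (((p:ℚ)+1) - j)) (p+1)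
  push_cast at hrefl ⊢
  rw [← hrefl]
  have hterm : ∀ j ∈ range (p+1),
      (-1:ℚ)^((p+1)+(p-j)+1) * ((p+1).choose (p-j) : ℚ) / (((p:ℚ)+1) - ((p-j : ℕ):ℚ))
      = -((-1:ℚ)^(j+1) * ((p+1).choose (j+1) : ℚ) / ((j:ℚ)+1)) := by
    intro j hj
    simp only [Finset.mem_range] at hj
    have hjp : j ≤ p := by omega
    have h2 : (p+1).choose (p-j) = (p+1).choose (j+1) := by
      have := Nat.choose_symm (n := p+1) (k := j+1) (by omega)
      rw [show p+1-(j+1) = p-j by omega] at this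
      exact this
    rw [h2]
    have h3 : ((p:ℚ)+1) - ((p-j : ℕ):ℚ) = (j:ℚ)+1 := by
      rw [Nat.cast_sub hjp]; ring
    rw [h3]
    have h4 : (-1:ℚ)^((p+1)+(p-j)+1) = -(-1:ℚ)^(j+1) := by
      have he : (p+1)+(p-j)+1 = 2*(p-j) + (j+2) := by omega
      rw [he, pow_add, pow_mul, neg_one_sq, one_pow, one_mul]
      ring
    rw [h4]
    ring
  rw [Finset.sum_congr rfl hterm, Finset.sum_neg_distrib]
  have hlemH := lemH (p+1)
  rw [Finset.sum_range_succ'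
    (fun m => (-1:ℚ)^m * ((p+1).choose m : ℚ) / m) (p+1)] at hlemH
  have h0 : (-1:ℚ)^0 * ((p+1).choose 0 : ℚ) / ((0:ℕ):ℚ) = 0 := by simp
  rw [h0, add_zero] at hlemH
  push_cast at hlemH
  rw [hlemH]
  push_cast
  ring

lemma lemT : ∀ p k, k ≤ p →
    Dsum p k + Esum p k = (p.choose k : ℚ) * (harmonic k - harmonic (p-k)) := by
  intro p
  induction p with
  | zero =>
    intro k hk
    interval_cases k
    simp [Dsum, Esum]
  | succ p ih =>
    intro k hk
    match k with
    | 0 =>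
      have hE : Esum (p+1) 0 = 0 := by simp [Esum]
      rw [hE, add_zero, Dsum_zero_eq, lemH]
      simp
    | Nat.succ k =>
      simp only [Nat.succ_eq_add_one] at hk ⊢
      rcases Nat.lt_or_ge (k+1) (p+1) with hlt | hge
      · -- k+1 ≤ p
        rw [Drec, Erec]
        have hk1p : k+1 ≤ p := by omega
        have ih1 := ih (k+1) hk1p
        have ih2 := ih k (by omega)
        have hidx : p + 1 - (k+1) = p - k := by omega
        rw [hidx]
        have e3 : (((p+1).choose (k+1)) : ℚ) = (p.choose k : ℚ) + (p.choose (k+1) : ℚ) := by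
          rw [Nat.choose_succ_succ]; push_cast; ring
        have e2' : ((k:ℚ)+1) * (harmonic (k+1) - harmonic k) = 1 := by
          rw [harmonic_succ]
          have : ((k:ℚ)+1) ≠ 0 := by positivity
          push_cast
          field_simp
          ring
        have e1' : ((p:ℚ)-k) * (harmonic (p-k) - harmonic (p-(k+1))) = 1 := by
          have hs : p - k = (p - (k+1)) + 1 := by omega
          rw [hs, harmonic_succ]
          have hc : (((p - (k+1) : ℕ):ℚ)+1) = (p:ℚ)-k := by
            rw [Nat.cast_sub (by omega : k+1 ≤ p)]; push_cast; ring
          push_cast at hc ⊢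
          rw [hc]
          have : ((p:ℚ)-(k:ℚ)) ≠ 0 := by
            have : (k:ℚ) + 1 ≤ (p:ℚ) := by exact_mod_cast hk1p
            nlinarith
          field_simp
          ring
        have hB := lemB p k
        linear_combination ih1 + ih2
          - (harmonic (k+1) - harmonic (p-k)) * e3
          + (harmonic (p-k) - harmonic (p-(k+1))) * (harmonic (k+1) - harmonic k) * hB
          - (p.choose (k+1) : ℚ) * (harmonic (p-k) - harmonic (p-(k+1))) * e2'
          + (p.choose k : ℚ) * (harmonic (k+1) - harmonic k) * e1'
      · -- k = p
        have hkp : k = p := by omega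
        subst hkp
        have hD1 : Dsum (k+1) (k+1) = 0 := by
          rw [Dsum]
          apply Finset.sum_eq_zero
          intro m hm
          simp only [Finset.mem_Icc] at hm
          rw [Nat.choose_eq_zero_of_lt (by omega)]
          simp
        rw [hD1, zero_add, Esum_diag, Nat.choose_self, Nat.sub_self]
        simp [harmonic]

noncomputable section

def Pc (x k : ℚ) : ℚ :=
  3*(x+1)*(3*x+4) * ( 3*(3*x+4)*k^7 - (45*x^2+132*x+96)*k^6 + (87*x^3+396*x^2+594*x+294)*k^5
    - (78*x^4+483*x^3+1107*x^2+1113*x+414)*k^4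
    + (28*x^5+220*x^4+682*x^3+1042*x^2+784*x+232)*k^3 )

def Qc (x k : ℚ) : ℚ :=
  -(252*x^7+2568*x^6+11094*x^5+26340*x^4+37122*x^3+31056*x^2+14280*x+2784)*k^2
  + (600*x^6+5104*x^5+17904*x^4+33158*x^3+34198*x^2+18624*x+4184)*k^3
  - (603*x^5+4137*x^4+11247*x^3+15147*x^2+10104*x+2670)*k^4
  + (288*x^4+1512*x^3+2952*x^2+2538*x+810)*k^5
  - (54*x^3+198*x^2+240*x+96)*k^6

def gg (p k : ℕ) : ℚ :=
  (-1:ℚ)^k * (((p+2).choose k : ℚ))^3 * (Pc (p:ℚ) (k:ℚ) * harmonic k + Qc (p:ℚ) (k:ℚ))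
    / (((p:ℚ)+1)^3*((p:ℚ)+2)^3)

set_option maxHeartbeats 16000000 in
lemma cert (p k : ℕ) :
    (-3*(3*(p:ℚ)+2)*(3*(p:ℚ)+4)*(3*((p:ℚ)+1)*(3*(p:ℚ)+4)))
        * (-1:ℚ)^k * ((p.choose k : ℚ))^3 * harmonic k
    + (-((p:ℚ)+2)^2*(3*((p:ℚ)+1)*(3*(p:ℚ)+4)))
        * (-1:ℚ)^k * (((p+2).choose k : ℚ))^3 * harmonic k
    + (3*(3*(p:ℚ)+4)*(3*((p:ℚ)+1)*(3*(p:ℚ)+4))) * (-1:ℚ)^k * ((p.choose k : ℚ))^3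
    + (((p:ℚ)+2)*(21*(p:ℚ)^2+56*(p:ℚ)+38)) * (-1:ℚ)^k * (((p+2).choose k : ℚ))^3
    = gg p (k+1) - gg p k := by
  have hp1 : ((p:ℚ)+1) ≠ 0 := by positivity
  have hp2 : ((p:ℚ)+2) ≠ 0 := by positivity
  have hk1 : ((k:ℚ)+1) ≠ 0 := by positivity
  have hx : (p.choose k : ℚ)
      = ((p:ℚ)+1-k)*((p:ℚ)+2-k)*(((p+2).choose k : ℚ))/(((p:ℚ)+1)*((p:ℚ)+2)) := by
    have h1 := lemA p k
    have h2 := lemA (p+1) k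
    rw [show p+1+1 = p+2 from rfl] at h2
    push_cast at h2
    field_simp
    linear_combination -(((p:ℚ)+2)*h1) - (((p:ℚ)+1-k))*h2
  have hY : (((p+2).choose (k+1) : ℚ))
      = (((p+2).choose k : ℚ)) * ((p:ℚ)+2-k)/((k:ℚ)+1) := by
    have h := lemB (p+2) k
    push_cast at h
    field_simp
    linarith [h]
  rw [gg, gg]
  push_cast
  rw [hY, harmonic_succ, hx]
  push_cast
  rw [pow_succ]
  simp only [Pc, Qc]
  field_simp
  ring

def Bsum (n : ℕ) : ℚ := ∑ k ∈ range (n+1), (-1:ℚ)^k * ((n.choose k:ℚ))^3 * harmonic k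

lemma neg_one_pow_sub (n j : ℕ) (hj : j ≤ n) (hodd : Odd n) :
    (-1:ℚ)^(n-j) = -(-1:ℚ)^j := by
  have h1 : (n-j) + j = n := by omega
  have hsq : ((-1:ℚ)^j) * ((-1:ℚ)^j) = 1 := by
    rw [← pow_add, ← two_mul, pow_mul]; norm_num
  have h2 : (-1:ℚ)^(n-j) * ((-1:ℚ)^j * (-1:ℚ)^j) = (-1:ℚ)^n * (-1:ℚ)^j := by
    rw [← mul_assoc, ← pow_add, h1]
  rw [hsq, mul_one, Odd.neg_one_pow hodd] at h2
  linarith [h2]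

lemma Aodd (n : ℕ) (h : Odd n) :
    ∑ k ∈ range (n+1), (-1:ℚ)^k * ((n.choose k:ℚ))^3 = 0 := by
  have hrefl := Finset.sum_range_reflect (fun k => (-1:ℚ)^k * ((n.choose k:ℚ))^3) (n+1)
  have hterm : ∀ j ∈ range (n+1),
      (-1:ℚ)^(n+1-1-j) * ((n.choose (n+1-1-j):ℚ))^3
      = -((-1:ℚ)^j * ((n.choose j:ℚ))^3) := by
    intro j hj
    simp only [Finset.mem_range] at hj
    have hjn : j ≤ n := by omega
    rw [show n+1-1-j = n-j by omega, Nat.choose_symm hjn, neg_one_pow_sub n j hjn h]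
    ring
  rw [Finset.sum_congr rfl hterm, Finset.sum_neg_distrib] at hrefl
  linarith [hrefl]

lemma sum_trim (f : ℕ → ℚ) (p : ℕ) (h1 : f (p+1) = 0) (h2 : f (p+2) = 0) :
    ∑ k ∈ range (p+3), f k = ∑ k ∈ range (p+1), f k := by
  rw [show p+3 = (p+2)+1 from rfl, Finset.sum_range_succ,
    show p+2 = (p+1)+1 from rfl, Finset.sum_range_succ, h1, h2]
  ring

lemma Brec (p : ℕ) (hodd : Odd p) :
    (-3*(3*(p:ℚ)+2)*(3*(p:ℚ)+4)*(3*((p:ℚ)+1)*(3*(p:ℚ)+4))) * Bsum p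
    + (-((p:ℚ)+2)^2*(3*((p:ℚ)+1)*(3*(p:ℚ)+4))) * Bsum (p+2) = 0 := by
  have hsum : ∑ k ∈ range (p+3),
      ((-3*(3*(p:ℚ)+2)*(3*(p:ℚ)+4)*(3*((p:ℚ)+1)*(3*(p:ℚ)+4)))
          * (-1:ℚ)^k * ((p.choose k : ℚ))^3 * harmonic k
      + (-((p:ℚ)+2)^2*(3*((p:ℚ)+1)*(3*(p:ℚ)+4)))
          * (-1:ℚ)^k * (((p+2).choose k : ℚ))^3 * harmonic k
      + (3*(3*(p:ℚ)+4)*(3*((p:ℚ)+1)*(3*(p:ℚ)+4))) * (-1:ℚ)^k * ((p.choose k : ℚ))^3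
      + (((p:ℚ)+2)*(21*(p:ℚ)^2+56*(p:ℚ)+38)) * (-1:ℚ)^k * (((p+2).choose k : ℚ))^3)
      = gg p (p+3) - gg p 0 := by
    rw [Finset.sum_congr rfl (fun k _ => cert p k)]
    exact Finset.sum_range_sub (gg p) (p+3)
  have hg0 : gg p 0 = 0 := by
    simp [gg, Pc, Qc]
  have hgend : gg p (p+3) = 0 := by
    have : (p+2).choose (p+3) = 0 := Nat.choose_eq_zero_of_lt (by omega)
    simp [gg, this]
  rw [hg0, hgend, sub_zero] at hsum
  -- split the sum
  have hsplit : ∀ k ∈ range (p+3),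
      ((-3*(3*(p:ℚ)+2)*(3*(p:ℚ)+4)*(3*((p:ℚ)+1)*(3*(p:ℚ)+4)))
          * (-1:ℚ)^k * ((p.choose k : ℚ))^3 * harmonic k
      + (-((p:ℚ)+2)^2*(3*((p:ℚ)+1)*(3*(p:ℚ)+4)))
          * (-1:ℚ)^k * (((p+2).choose k : ℚ))^3 * harmonic k
      + (3*(3*(p:ℚ)+4)*(3*((p:ℚ)+1)*(3*(p:ℚ)+4))) * (-1:ℚ)^k * ((p.choose k : ℚ))^3
      + (((p:ℚ)+2)*(21*(p:ℚ)^2+56*(p:ℚ)+38)) * (-1:ℚ)^k * (((p+2).choose k : ℚ))^3)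
      = (-3*(3*(p:ℚ)+2)*(3*(p:ℚ)+4)*(3*((p:ℚ)+1)*(3*(p:ℚ)+4)))
          * ((-1:ℚ)^k * ((p.choose k : ℚ))^3 * harmonic k)
      + (-((p:ℚ)+2)^2*(3*((p:ℚ)+1)*(3*(p:ℚ)+4)))
          * ((-1:ℚ)^k * (((p+2).choose k : ℚ))^3 * harmonic k)
      + (3*(3*(p:ℚ)+4)*(3*((p:ℚ)+1)*(3*(p:ℚ)+4))) * ((-1:ℚ)^k * ((p.choose k : ℚ))^3)
      + (((p:ℚ)+2)*(21*(p:ℚ)^2+56*(p:ℚ)+38)) * ((-1:ℚ)^k * (((p+2).choose k : ℚ))^3) := by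
    intro k _
    ring
  rw [Finset.sum_congr rfl hsplit] at hsum
  rw [Finset.sum_add_distrib, Finset.sum_add_distrib, Finset.sum_add_distrib,
    ← Finset.mul_sum, ← Finset.mul_sum, ← Finset.mul_sum, ← Finset.mul_sum] at hsum
  have hz1 : ∀ q : ℕ, p < q → ((-1:ℚ)^q * ((p.choose q:ℚ))^3 * harmonic q) = 0 := by
    intro q hq
    rw [Nat.choose_eq_zero_of_lt hq]
    ring
  have hz2 : ∀ q : ℕ, p < q → ((-1:ℚ)^q * ((p.choose q:ℚ))^3) = 0 := by
    intro q hq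
    rw [Nat.choose_eq_zero_of_lt hq]
    ring
  have e1 : ∑ k ∈ range (p+3), (-1:ℚ)^k * ((p.choose k:ℚ))^3 * harmonic k = Bsum p := by
    rw [sum_trim _ p (hz1 _ (by omega)) (hz1 _ (by omega))]; rfl
  have e2 : ∑ k ∈ range (p+3), (-1:ℚ)^k * (((p+2).choose k:ℚ))^3 * harmonic k = Bsum (p+2) := by
    rfl
  have e3 : ∑ k ∈ range (p+3), (-1:ℚ)^k * ((p.choose k:ℚ))^3 = 0 := by
    rw [sum_trim _ p (hz2 _ (by omega)) (hz2 _ (by omega))]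
    exact Aodd p hodd
  have e4 : ∑ k ∈ range (p+3), (-1:ℚ)^k * (((p+2).choose k:ℚ))^3 = 0 := by
    have : Odd (p+2) := by
      obtain ⟨t, ht⟩ := hodd
      exact ⟨t+1, by omega⟩
    exact Aodd (p+2) this
  rw [e1, e2, e3, e4] at hsum
  linarith [hsum]

lemma dfac_ne (n : ℕ) : ((n.doubleFactorial : ℚ)) ≠ 0 := by
  exact_mod_cast (Nat.doubleFactorial_pos n).ne'

lemma Bval : ∀ m : ℕ, Bsum (2*m+1)
    = (-1:ℚ)^(m+1) * ((Nat.doubleFactorial (3*(2*m+1)) : ℕ) : ℚ)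
      / (3 * (((Nat.doubleFactorial (2*m+1) : ℕ) : ℚ))^3) := by
  intro m
  induction m with
  | zero =>
    rw [Bsum]
    norm_num [Finset.sum_range_succ, harmonic_succ, Nat.doubleFactorial]
  | succ m ih =>
    have hodd : Odd (2*m+1) := ⟨m, by ring⟩
    have hrec := Brec (2*m+1) hodd
    rw [ih] at hrec
    rw [show 2*m+1+2 = 2*(m+1)+1 by ring] at hrec
    have a1 : (3*(2*(m+1)+1)).doubleFactorial = ((6*m+7)+2) * (6*m+7).doubleFactorial := by
      rw [show 3*(2*(m+1)+1) = (6*m+7)+2 by ring]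
      exact Nat.doubleFactorial_add_two _
    have a2 : (6*m+7).doubleFactorial = ((6*m+5)+2) * (6*m+5).doubleFactorial := by
      rw [show 6*m+7 = (6*m+5)+2 by ring]
      exact Nat.doubleFactorial_add_two _
    have a3 : (6*m+5).doubleFactorial = ((3*(2*m+1))+2) * (3*(2*m+1)).doubleFactorial := by
      rw [show 6*m+5 = (3*(2*m+1))+2 by ring]
      exact Nat.doubleFactorial_add_two _
    have b1 : (2*(m+1)+1).doubleFactorial = ((2*m+1)+2) * (2*m+1).doubleFactorial := by
      rw [show 2*(m+1)+1 = (2*m+1)+2 by ring]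
      exact Nat.doubleFactorial_add_two _
    have hdN : (3*(2*(m+1)+1)).doubleFactorial
        = (6*m+9)*((6*m+7)*((6*m+5)*(3*(2*m+1)).doubleFactorial)) := by
      rw [a1, a2, a3]; ring
    have hbN : (2*(m+1)+1).doubleFactorial = (2*m+3)*((2*m+1).doubleFactorial) := by
      rw [b1]
    set T : ℚ := ((3*(2*m+1)).doubleFactorial : ℚ) with hTdef
    set U : ℚ := ((2*m+1).doubleFactorial : ℚ) with hUdef
    have hT : T ≠ 0 := dfac_ne _
    have hU : U ≠ 0 := dfac_ne _
    have hd : (((3*(2*(m+1)+1)).doubleFactorial : ℕ) : ℚ)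
        = (6*(m:ℚ)+9)*((6*(m:ℚ)+7)*((6*(m:ℚ)+5)*T)) := by
      rw [hdN, hTdef]
      push_cast
      ring
    have hb : (((2*(m+1)+1).doubleFactorial : ℕ) : ℚ) = (2*(m:ℚ)+3)*U := by
      rw [hbN, hUdef]
      push_cast
      ring
    rw [hd, hb, pow_succ]
    have hc : ((2*m+1:ℕ):ℚ) = 2*(m:ℚ)+1 := by push_cast; ring
    rw [hc] at hrec
    field_simp at hrec
    have hσne : (3*(2*(m:ℚ)+2)*(6*(m:ℚ)+7)) ≠ 0 := by positivity
    have hA : 3*(6*(m:ℚ)+5)*(6*(m:ℚ)+7)*((-1:ℚ)^(m+1))*T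
        + (2*(m:ℚ)+3)^2*(Bsum (2*(m+1)+1))*(3*U^3) = 0 := by
      have hmul : (3*(2*(m:ℚ)+2)*(6*(m:ℚ)+7)) *
          (3*(6*(m:ℚ)+5)*(6*(m:ℚ)+7)*((-1:ℚ)^(m+1))*T
            + (2*(m:ℚ)+3)^2*(Bsum (2*(m+1)+1))*(3*U^3)) = 0 := by
        linear_combination -3 * hrec
      exact (mul_eq_zero.mp hmul).resolve_left hσne
    have hden : (3*((2*(m:ℚ)+3)*U)^3) ≠ 0 := by
      refine mul_ne_zero (by norm_num) (pow_ne_zero _ (mul_ne_zero (by positivity) hU))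
    rw [eq_div_iff hden]
    linear_combination (2*(m:ℚ)+3) * hA

lemma npe (a b : ℕ) (h : 2 ∣ (a+b)) : (-1:ℚ)^a = (-1:ℚ)^b := by
  obtain ⟨c, hc⟩ := h
  have h1 : (-1:ℚ)^a * (-1:ℚ)^b = 1 := by
    rw [← pow_add, hc, pow_mul]
    norm_num
  have h2 : (-1:ℚ)^b * (-1:ℚ)^b = 1 := by
    rw [← pow_add, ← two_mul, pow_mul]
    norm_num
  calc (-1:ℚ)^a = (-1:ℚ)^a * ((-1:ℚ)^b * (-1:ℚ)^b) := by rw [h2, mul_one]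
    _ = ((-1:ℚ)^a * (-1:ℚ)^b) * (-1:ℚ)^b := by ring
    _ = (-1:ℚ)^b := by rw [h1, one_mul]

noncomputable def Ssum (p : ℕ) : ℚ :=
  ∑ m ∈ Finset.Icc 1 p, ∑ k ∈ Finset.range (p+1),
    (-1 : ℚ)^(m+k) * (1 / (m : ℚ)) * (p.choose k : ℚ)^2 * (p.choose (m + k) : ℚ)

lemma stepA (p : ℕ) :
    Ssum p = ∑ k ∈ range (p+1), (-1:ℚ)^k * ((p.choose k : ℚ))^2 * Dsum p k := by
  rw [Ssum, Finset.sum_comm]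
  apply Finset.sum_congr rfl
  intro k _
  rw [Dsum, Finset.mul_sum]
  apply Finset.sum_congr rfl
  intro m _
  rw [pow_add]
  ring

def Tri (p : ℕ) : Finset (ℕ × ℕ) :=
  (Icc 1 p ×ˢ range (p+1)).filter (fun q => q.1 + q.2 ≤ p)

lemma stepB (p : ℕ) :
    Ssum p = ∑ q ∈ Tri p, (-1:ℚ)^(q.1+q.2) * (1/(q.1:ℚ)) * (p.choose q.2 : ℚ)^2
      * (p.choose (q.1+q.2) : ℚ) := by
  rw [Ssum, ← Finset.sum_product']
  rw [Tri]
  rw [eq_comm]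
  apply Finset.sum_subset (Finset.filter_subset _ _)
  intro q hq hnq
  simp only [Finset.mem_filter] at hnq
  have : ¬ (q.1 + q.2 ≤ p) := fun hc => hnq ⟨hq, hc⟩
  rw [Nat.choose_eq_zero_of_lt (show p < q.1 + q.2 by omega)]
  ring

lemma stepC (p : ℕ) :
    ∑ k ∈ range (p+1), (-1:ℚ)^k * ((p.choose k : ℚ))^2 * Esum p k
    = ∑ q ∈ Tri p, (-1:ℚ)^(q.2+1) * (p.choose (q.1+q.2) : ℚ)^2 * (p.choose q.2 : ℚ) / (q.1:ℚ) := by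
  have hexp : ∀ k ∈ range (p+1), (-1:ℚ)^k * ((p.choose k : ℚ))^2 * Esum p k
      = ∑ j ∈ range k, (-1:ℚ)^k * ((p.choose k : ℚ))^2
          * ((-1:ℚ)^(k+j+1) * (p.choose j : ℚ) / ((k:ℚ) - j)) := by
    intro k _
    rw [Esum, Finset.mul_sum]
  rw [Finset.sum_congr rfl hexp, Finset.sum_sigma' (range (p+1)) (fun k => range k)]
  refine Finset.sum_nbij' (fun x => (x.1 - x.2, x.2)) (fun q => ⟨q.1 + q.2, q.2⟩) ?_ ?_ ?_ ?_ ?_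
  · intro x hx
    simp only [Finset.mem_sigma, Finset.mem_range] at hx
    simp only [Tri, Finset.mem_filter, Finset.mem_product, Finset.mem_Icc, Finset.mem_range]
    omega
  · intro q hq
    simp only [Tri, Finset.mem_filter, Finset.mem_product, Finset.mem_Icc, Finset.mem_range] at hq
    simp only [Finset.mem_sigma, Finset.mem_range]
    omega
  · intro x hx
    simp only [Finset.mem_sigma, Finset.mem_range] at hx
    have : x.1 - x.2 + x.2 = x.1 := by omega
    exact Sigma.ext (by simpa using this) (by simp)
  · intro q hq
    simp only [Tri, Finset.mem_filter, Finset.mem_product, Finset.mem_Icc, Finset.mem_range] at hq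
    rw [Prod.ext_iff]
    refine ⟨by simp, rfl⟩
  · intro x hx
    simp only [Finset.mem_sigma, Finset.mem_range] at hx
    obtain ⟨k, j⟩ := x
    simp only at hx ⊢
    have h1 : k - j + j = k := by omega
    rw [h1]
    have h2 : ((k - j : ℕ) : ℚ) = (k:ℚ) - (j:ℚ) := by
      rw [Nat.cast_sub (by omega)]
    rw [h2]
    have h3 : (-1:ℚ)^k * (-1:ℚ)^(k+j+1) = (-1:ℚ)^(j+1) := by
      rw [← pow_add]
      exact npe _ _ ⟨k + j + 1, by ring⟩
    have h5 : (-1:ℚ)^k * ((p.choose k : ℚ))^2 * ((-1:ℚ)^(k+j+1) * (p.choose j : ℚ) / ((k:ℚ) - j))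
        = ((-1:ℚ)^k * (-1:ℚ)^(k+j+1)) * (((p.choose k : ℚ))^2 * (p.choose j : ℚ) / ((k:ℚ) - j)) := by
      ring
    rw [h5, h3]
    ring

lemma stepD (p : ℕ) (hodd : Odd p) :
    Ssum p = ∑ k ∈ range (p+1), (-1:ℚ)^k * ((p.choose k : ℚ))^2 * Esum p k := by
  rw [stepB, stepC]
  refine Finset.sum_nbij' (fun q => (q.1, p - q.1 - q.2)) (fun q => (q.1, p - q.1 - q.2))
    ?_ ?_ ?_ ?_ ?_
  · intro q hq
    simp only [Tri, Finset.mem_filter, Finset.mem_product, Finset.mem_Icc, Finset.mem_range] at hq ⊢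
    omega
  · intro q hq
    simp only [Tri, Finset.mem_filter, Finset.mem_product, Finset.mem_Icc, Finset.mem_range] at hq ⊢
    omega
  · intro q hq
    simp only [Tri, Finset.mem_filter, Finset.mem_product, Finset.mem_Icc, Finset.mem_range] at hq
    rw [Prod.ext_iff]
    refine ⟨rfl, by simp; omega⟩
  · intro q hq
    simp only [Tri, Finset.mem_filter, Finset.mem_product, Finset.mem_Icc, Finset.mem_range] at hq
    rw [Prod.ext_iff]
    refine ⟨rfl, by simp; omega⟩
  · intro q hq
    simp only [Tri, Finset.mem_filter, Finset.mem_product, Finset.mem_Icc, Finset.mem_range] at hq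
    obtain ⟨m, k⟩ := q
    simp only at hq ⊢
    have hm1 : 1 ≤ m := hq.1.1.1
    have hmk : m + k ≤ p := hq.2
    have e1 : m + (p - m - k) = p - k := by omega
    rw [e1]
    have e2 : p.choose (p - k) = p.choose k := Nat.choose_symm (by omega)
    have e3 : p.choose (p - m - k) = p.choose (m+k) := by
      rw [show p - m - k = p - (m+k) by omega]
      exact Nat.choose_symm (by omega)
    rw [e2, e3]
    have e4 : (-1:ℚ)^(p - m - k + 1) = (-1:ℚ)^(m+k) := by
      apply npe
      obtain ⟨t, ht⟩ := hodd
      refine ⟨(p - m - k + 1 + (m + k))/2, by omega⟩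
    rw [e4]
    ring

lemma SeqB (p : ℕ) (hodd : Odd p) : Ssum p = Bsum p := by
  have h2S : Ssum p + Ssum p
      = ∑ k ∈ range (p+1), (-1:ℚ)^k * ((p.choose k : ℚ))^2 * (Dsum p k + Esum p k) := by
    nth_rewrite 1 [stepA]
    nth_rewrite 1 [stepD p hodd]
    rw [← Finset.sum_add_distrib]
    apply Finset.sum_congr rfl
    intro k _
    ring
  have hT : ∀ k ∈ range (p+1),
      (-1:ℚ)^k * ((p.choose k : ℚ))^2 * (Dsum p k + Esum p k)
      = (-1:ℚ)^k * ((p.choose k : ℚ))^3 * harmonic k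
        - (-1:ℚ)^k * ((p.choose k : ℚ))^3 * harmonic (p-k) := by
    intro k hk
    simp only [Finset.mem_range] at hk
    rw [lemT p k (by omega)]
    ring
  rw [Finset.sum_congr rfl hT, Finset.sum_sub_distrib] at h2S
  have hrefl : ∑ k ∈ range (p+1), (-1:ℚ)^k * ((p.choose k : ℚ))^3 * harmonic (p-k)
      = - Bsum p := by
    have h := Finset.sum_range_reflect
      (fun k => (-1:ℚ)^k * ((p.choose k : ℚ))^3 * harmonic (p-k)) (p+1)
    have hterm : ∀ j ∈ range (p+1),
        (-1:ℚ)^(p+1-1-j) * ((p.choose (p+1-1-j) : ℚ))^3 * harmonic (p-(p+1-1-j))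
        = -((-1:ℚ)^j * ((p.choose j : ℚ))^3 * harmonic j) := by
      intro j hj
      simp only [Finset.mem_range] at hj
      have hjp : j ≤ p := by omega
      rw [show p+1-1-j = p-j by omega, Nat.choose_symm hjp,
        show p-(p-j) = j by omega, neg_one_pow_sub p j hjp hodd]
      ring
    rw [Finset.sum_congr rfl hterm, Finset.sum_neg_distrib] at h
    rw [← h]
    rfl
  rw [hrefl] at h2S
  have : Ssum p + Ssum p = Bsum p + Bsum p := by
    rw [h2S, Bsum]
    ring
  linarith [this]


theorem stmt7 (p : ℕ) (hodd : Odd p) (hp : 0 < p) :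
    ∑ m ∈ Finset.Icc 1 p, ∑ k ∈ Finset.range (p+1),
        (-1 : ℚ)^(m+k) * (1 / (m : ℚ)) * (p.choose k : ℚ)^2 * (p.choose (m + k) : ℚ)
      = (-1 : ℚ)^((p+1)/2) * (Nat.doubleFactorial (3*p) : ℚ) /
          (3 * (Nat.doubleFactorial p : ℚ)^3) := by
  obtain ⟨m, hm⟩ := hodd
  subst hm
  have hS : (∑ x ∈ Finset.Icc 1 (2*m+1), ∑ k ∈ Finset.range (2*m+1+1),
      (-1 : ℚ)^(x+k) * (1 / (x : ℚ)) * ((2*m+1).choose k : ℚ)^2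
        * ((2*m+1).choose (x + k) : ℚ)) = Ssum (2*m+1) := rfl
  rw [hS, SeqB (2*m+1) ⟨m, rfl⟩, Bval m, show (2*m+1+1)/2 = m+1 by omega]
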